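/- Let A, B be computable well-orderings of ℕ and f a computable reduction from E_min(A) to E_min(B) that is well-defined on c.e. sets. If the A-least element of W_e has A-rank γ, then W_{f(e)} is nonempty and its B-least element has B-rank at least γ. -/

import Mathlib

set_option maxHeartbeats 1000000


/-- The `e`-th computably enumerable set of natural numbers: the domain of the
`e`-th partial computable function. -/
def Wce (e : ℕ) : Set ℕ :=
  {x | ((Denumerable.ofNat Nat.Partrec.Code e).eval x).Dom}


/-- A computable well-ordering of ℕ: a computable (Bool-valued) binary relation
whose associated strict relation is a well-order on ℕ. -/
structure CompWO where
  r : ℕ → ℕ → Bool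
  comp : Computable₂ r
  wo : IsWellOrder ℕ (fun a b => r a b = true)

/-- `m` is the `A`-least element of `S`. -/
def IsMinOf (A : CompWO) (S : Set ℕ) (m : ℕ) : Prop :=
  m ∈ S ∧ ∀ x ∈ S, A.r x m = false

/-- The equivalence relation `E_min(A)` on indices of c.e. sets: `W_e` and `W_i`
have the same `A`-least element, or are both empty. -/
def Emin (A : CompWO) (e i : ℕ) : Prop :=
  (Wce e = ∅ ∧ Wce i = ∅) ∨ ∃ m, IsMinOf A (Wce e) m ∧ IsMinOf A (Wce i) m

/-- Computable reducibility of binary relations on ℕ. -/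
def CompReducible (E F : ℕ → ℕ → Prop) : Prop :=
  ∃ h : ℕ → ℕ, Computable h ∧ ∀ x y, E x y ↔ F (h x) (h y)

/-- The order type of a computable well-ordering. -/
noncomputable def CompWO.otype (A : CompWO) : Ordinal :=
  @Ordinal.type ℕ (fun a b => A.r a b = true) A.wo

/-- The `A`-rank of an element: the order type of its set of predecessors. -/
noncomputable def CompWO.rank (A : CompWO) (a : ℕ) : Ordinal :=
  @Ordinal.typein ℕ (fun a b => A.r a b = true) A.wo a

section Stmt6Aux

open Nat.Partrec (Code)
open Nat.Partrec.Code

/-- The code with index `e`. -/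
def codeOf (e : ℕ) : Code := Denumerable.ofNat Code e

/-- Stage-`n` membership witness for `Wce`. -/
def memW (e y n : ℕ) : Bool := (evaln n (codeOf e) y).isSome

lemma mem_iff_memW {e y : ℕ} : y ∈ Wce e ↔ ∃ n, memW e y n = true := by
  constructor
  · intro h
    obtain ⟨x, hx⟩ := Part.dom_iff_mem.1 h
    obtain ⟨k, hk⟩ := evaln_complete.1 hx
    exact ⟨k, by simp [memW, Option.isSome_iff_exists]; exact ⟨x, hk⟩⟩
  · rintro ⟨n, hn⟩
    simp only [memW, Option.isSome_iff_exists] at hn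
    obtain ⟨x, hx⟩ := hn
    exact Part.dom_iff_mem.2 ⟨x, evaln_sound hx⟩

lemma nonempty_iff_memW {e : ℕ} :
    (Wce e).Nonempty ↔ ∃ n, memW e (Nat.unpair n).1 (Nat.unpair n).2 = true := by
  constructor
  · rintro ⟨y, hy⟩
    obtain ⟨n, hn⟩ := mem_iff_memW.1 hy
    exact ⟨Nat.pair y n, by simpa using hn⟩
  · rintro ⟨n, hn⟩
    exact ⟨(Nat.unpair n).1, mem_iff_memW.2 ⟨(Nat.unpair n).2, hn⟩⟩

lemma memW_computable : Computable fun t : ℕ × ℕ × ℕ => memW t.1 t.2.1 t.2.2 := by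
  have h1 : Primrec fun t : ℕ × ℕ × ℕ => ((t.2.2, codeOf t.1), t.2.1) :=
    ((Primrec.snd.comp Primrec.snd).pair ((Primrec.ofNat Code).comp Primrec.fst)).pair
      (Primrec.fst.comp Primrec.snd)
  exact (Primrec.option_isSome.comp (primrec_evaln.comp h1)).to_comp

/-- An index for any set with a computably witnessed membership predicate. -/
lemma exists_index {p : ℕ → ℕ → Bool} (hp : Computable₂ p) :
    ∃ e, Wce e = {x | ∃ n, p x n = true} := by
  have hF : Partrec fun x => Nat.rfind fun n => (Part.some (p x n) : Part Bool) := by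
    apply Partrec.rfind
    exact hp.partrec₂
  obtain ⟨c, hc⟩ := exists_code.1 (Partrec.nat_iff.1 hF)
  refine ⟨Encodable.encode c, ?_⟩
  ext x
  have : Denumerable.ofNat Code (Encodable.encode c) = c := Denumerable.ofNat_encode c
  simp only [Wce, Set.mem_setOf_eq, this, hc]
  refine Nat.rfind_dom.trans ?_
  constructor
  · rintro ⟨n, hn, -⟩
    exact ⟨n, by simpa using hn⟩
  · rintro ⟨n, hn⟩
    exact ⟨n, by simpa using hn, fun {_} _ => trivial⟩

/-- Kleene fixed-point: an index `v` for a set defined in terms of `v` itself. -/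
lemma exists_fixed_index {p : ℕ → ℕ → ℕ → Bool}
    (hp : Computable fun t : ℕ × ℕ × ℕ => p t.1 t.2.1 t.2.2) :
    ∃ v, Wce v = {x | ∃ n, p v x n = true} := by
  have hq : Computable fun u : (Code × ℕ) × ℕ => p (Encodable.encode u.1.1) u.1.2 u.2 := by
    have h1 : Computable fun u : (Code × ℕ) × ℕ =>
        ((Encodable.encode u.1.1, u.1.2, u.2) : ℕ × ℕ × ℕ) :=
      (Computable.encode.comp (Computable.fst.comp Computable.fst)).pair
        ((Computable.snd.comp Computable.fst).pair Computable.snd)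
    exact hp.comp h1
  have hF : Partrec₂ fun (c : Code) (x : ℕ) =>
      Nat.rfind fun n => (Part.some (p (Encodable.encode c) x n) : Part Bool) := by
    apply Partrec.rfind
    exact (hq.to₂.partrec₂ : Partrec₂ _)
  obtain ⟨c, hc⟩ := fixed_point₂ hF
  refine ⟨Encodable.encode c, ?_⟩
  ext x
  have hco : Denumerable.ofNat Code (Encodable.encode c) = c := Denumerable.ofNat_encode c
  simp only [Wce, Set.mem_setOf_eq, hco, hc]
  refine Nat.rfind_dom.trans ?_
  constructor
  · rintro ⟨n, hn, -⟩
    exact ⟨n, by simpa using hn⟩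
  · rintro ⟨n, hn⟩
    exact ⟨n, by simpa using hn, fun {_} _ => trivial⟩

/-! ### Order lemmas -/

lemma CompWO.irrefl (A : CompWO) (a : ℕ) : A.r a a = false := by
  haveI := A.wo
  by_contra h
  exact (irrefl_of (fun a b => A.r a b = true) a) (by simpa using h)

lemma CompWO.rtrans (A : CompWO) {a b c : ℕ} (h1 : A.r a b = true) (h2 : A.r b c = true) :
    A.r a c = true := by
  haveI := A.wo
  exact trans_of (fun a b => A.r a b = true) h1 h2

lemma CompWO.trichot (A : CompWO) {a b : ℕ} (h1 : A.r a b = false) (h2 : A.r b a = false) :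
    a = b := by
  haveI := A.wo
  rcases trichotomous_of (fun a b => A.r a b = true) a b with h | h | h
  · rw [h1] at h; exact absurd h (by simp)
  · exact h
  · rw [h2] at h; exact absurd h (by simp)

lemma min_unique (A : CompWO) {S : Set ℕ} {m₁ m₂ : ℕ}
    (h₁ : IsMinOf A S m₁) (h₂ : IsMinOf A S m₂) : m₁ = m₂ :=
  A.trichot (h₂.2 m₁ h₁.1) (h₁.2 m₂ h₂.1)

lemma exists_min (A : CompWO) {S : Set ℕ} (hS : S.Nonempty) : ∃ m, IsMinOf A S m := by
  haveI := A.wo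
  obtain ⟨m, hmS, hmin⟩ :=
    (IsWellFounded.wf (r := fun a b => A.r a b = true)).has_min S hS
  exact ⟨m, hmS, fun x hx => by simpa using hmin x hx⟩

lemma rank_lt_rank (A : CompWO) {a b : ℕ} (h : A.r a b = true) : A.rank a < A.rank b := by
  haveI := A.wo
  exact (Ordinal.typein_lt_typein (fun a b => A.r a b = true)).2 h

lemma rank_surj (A : CompWO) {m : ℕ} {δ : Ordinal} (h : δ < A.rank m) :
    ∃ a, A.r a m = true ∧ A.rank a = δ := by
  haveI := A.wo
  have h2 : δ < @Ordinal.type ℕ (fun a b => A.r a b = true) _ :=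
    lt_trans h (Ordinal.typein_lt_type _ m)
  obtain ⟨a, ha⟩ := Ordinal.typein_surj (fun a b => A.r a b = true) h2
  refine ⟨a, ?_, ha⟩
  have h3 : A.rank a < A.rank m := by
    show Ordinal.typein _ a < _
    rw [ha]; exact h
  exact (Ordinal.typein_lt_typein (fun a b => A.r a b = true)).1 h3

/-! ### Cone indices -/

/-- An index for the upward cone `{x | ¬ x <_A a}`. -/
lemma exists_cone_index (A : CompWO) (a : ℕ) :
    ∃ g, Wce g = {x | A.r x a = false} := by
  have hp : Computable₂ fun x (_ : ℕ) => !A.r x a := by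
    have hT : Computable fun u : ℕ × ℕ => !A.r u.1 a := by
      have h1 : Computable fun u : ℕ × ℕ => A.r u.1 a :=
        A.comp.comp Computable.fst (Computable.const a)
      exact (Computable.cond h1 (Computable.const false) (Computable.const true)).of_eq
        (fun u => by cases h : A.r u.1 a <;> simp [h])
    exact hT.to₂
  obtain ⟨g, hg⟩ := exists_index hp
  refine ⟨g, hg.trans (Set.ext fun x => by cases h : A.r x a <;> simp [h])⟩

lemma cone_isMin (A : CompWO) (a : ℕ) : IsMinOf A {x | A.r x a = false} a :=
  ⟨A.irrefl a, fun x hx => hx⟩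

/-! ### Step 1: the image of a nonempty set is nonempty -/

lemma wfe_has_min (A B : CompWO) (f : ℕ → ℕ) (hf : Computable f)
    (hred : ∀ x y, Emin A x y ↔ Emin B (f x) (f y))
    (e m : ℕ) (hm : IsMinOf A (Wce e) m) :
    ∃ mb, IsMinOf B (Wce (f e)) mb := by
  by_contra hno
  have hempty : Wce (f e) = ∅ := by
    by_contra h
    obtain ⟨mb, hmb⟩ := exists_min B (Set.nonempty_iff_ne_empty.2 h)
    exact hno ⟨mb, hmb⟩
  -- fixed-point index v with W_v = {x | x = m ∧ W_{f v} ≠ ∅}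
  have hp : Computable fun t : ℕ × ℕ × ℕ =>
      cond (decide (t.2.1 = m)) (memW (f t.1) (Nat.unpair t.2.2).1 (Nat.unpair t.2.2).2) false := by
    have hx : Computable fun t : ℕ × ℕ × ℕ => (decide (t.2.1 = m) : Bool) :=
      (Primrec.eq.comp (Primrec.fst.comp Primrec.snd) (Primrec.const m)).decide.to_comp
    have hmem : Computable fun t : ℕ × ℕ × ℕ =>
        memW (f t.1) (Nat.unpair t.2.2).1 (Nat.unpair t.2.2).2 := by
      have hg : Computable fun t : ℕ × ℕ × ℕ =>
          ((f t.1, (Nat.unpair t.2.2).1, (Nat.unpair t.2.2).2) : ℕ × ℕ × ℕ) :=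
        (hf.comp Computable.fst).pair
          (((Primrec.fst.comp (Primrec.unpair.comp (Primrec.snd.comp Primrec.snd))).to_comp).pair
            ((Primrec.snd.comp (Primrec.unpair.comp (Primrec.snd.comp Primrec.snd))).to_comp))
      exact Computable.comp (f := fun u : ℕ × ℕ × ℕ => memW u.1 u.2.1 u.2.2)
        (g := fun t : ℕ × ℕ × ℕ => (f t.1, (Nat.unpair t.2.2).1, (Nat.unpair t.2.2).2))
        memW_computable hg
    exact Computable.cond hx hmem (Computable.const false)
  obtain ⟨v, hv⟩ := exists_fixed_index (p := fun v x n =>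
    cond (decide (x = m)) (memW (f v) (Nat.unpair n).1 (Nat.unpair n).2) false) hp
  have hWv : ∀ x, x ∈ Wce v ↔ (x = m ∧ (Wce (f v)).Nonempty) := by
    intro x
    rw [hv]
    by_cases hx : x = m
    · subst hx
      simp [nonempty_iff_memW]
    · simp [hx]
  by_cases hWfv : (Wce (f v)).Nonempty
  · have hvm : IsMinOf A (Wce v) m := by
      refine ⟨(hWv m).2 ⟨rfl, hWfv⟩, fun x hx => ?_⟩
      obtain ⟨rfl, -⟩ := (hWv x).1 hx
      exact A.irrefl _
    have hEB : Emin B (f v) (f e) := (hred v e).1 (Or.inr ⟨m, hvm, hm⟩)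
    rcases hEB with ⟨h1, -⟩ | ⟨mb, -, h2⟩
    · rw [h1] at hWfv; exact hWfv.ne_empty rfl
    · exact hno ⟨mb, h2⟩
  · have hfv : Wce (f v) = ∅ := Set.not_nonempty_iff_eq_empty.1 hWfv
    have hEA : Emin A v e := (hred v e).2 (Or.inl ⟨hfv, hempty⟩)
    rcases hEA with ⟨-, h2⟩ | ⟨m', h1, -⟩
    · rw [h2] at hm; exact hm.1
    · have := (hWv m').1 h1.1
      exact hWfv this.2

/-! ### Main theorem -/

theorem stmt6 (A B : CompWO) (f : ℕ → ℕ) (hf : Computable f)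
    (hred : ∀ x y, Emin A x y ↔ Emin B (f x) (f y))
    (hwd : ∀ e i, Wce e = Wce i → Wce (f e) = Wce (f i))
    (e m : ℕ) (hm : IsMinOf A (Wce e) m) :
    ∃ mb, IsMinOf B (Wce (f e)) mb ∧ A.rank m ≤ B.rank mb := by
  haveI := A.wo
  have wfA := IsWellFounded.wf (r := fun a b => A.r a b = true)
  induction m using WellFounded.induction wfA generalizing e with
  | _ m IH => ?_
  obtain ⟨mb, hmb⟩ := wfe_has_min A B f hf hred e m hm
  refine ⟨mb, hmb, le_of_forall_lt fun δ hδ => ?_⟩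
  obtain ⟨a, ham, hrank⟩ := rank_surj A hδ
  obtain ⟨ga, hga⟩ := exists_cone_index A a
  obtain ⟨gm, hgm⟩ := exists_cone_index A m
  have hga_min : IsMinOf A (Wce ga) a := by rw [hga]; exact cone_isMin A a
  have hgm_min : IsMinOf A (Wce gm) m := by rw [hgm]; exact cone_isMin A m
  obtain ⟨ba, hba, hrba⟩ := IH a ham ga hga_min
  -- fixed-point index: W_v = cone m ∪ (cone a if mb ∈ W_{f v})
  have hp : Computable fun t : ℕ × ℕ × ℕ =>
      cond (A.r t.2.1 m) (cond (A.r t.2.1 a) false (memW (f t.1) mb t.2.2)) true := by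
    have h1 : Computable fun t : ℕ × ℕ × ℕ => A.r t.2.1 m :=
      A.comp.comp (Computable.fst.comp Computable.snd) (Computable.const m)
    have h2 : Computable fun t : ℕ × ℕ × ℕ => A.r t.2.1 a :=
      A.comp.comp (Computable.fst.comp Computable.snd) (Computable.const a)
    have h3 : Computable fun t : ℕ × ℕ × ℕ => memW (f t.1) mb t.2.2 := by
      have hg : Computable fun t : ℕ × ℕ × ℕ => ((f t.1, mb, t.2.2) : ℕ × ℕ × ℕ) :=
        (hf.comp Computable.fst).pair
          ((Computable.const mb).pair (Computable.snd.comp Computable.snd))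
      exact Computable.comp (f := fun u : ℕ × ℕ × ℕ => memW u.1 u.2.1 u.2.2)
        (g := fun t : ℕ × ℕ × ℕ => (f t.1, mb, t.2.2)) memW_computable hg
    exact Computable.cond h1 (Computable.cond h2 (Computable.const false) h3)
      (Computable.const true)
  obtain ⟨v, hv⟩ := exists_fixed_index (p := fun v x n =>
    cond (A.r x m) (cond (A.r x a) false (memW (f v) mb n)) true) hp
  have hWv : ∀ x, x ∈ Wce v ↔
      (A.r x m = false ∨ (A.r x a = false ∧ mb ∈ Wce (f v))) := by
    intro x
    rw [hv]
    cases hxm : A.r x m <;> cases hxa : A.r x a <;>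
      simp [hxm, hxa, mem_iff_memW]
  by_cases hc : mb ∈ Wce (f v)
  · -- W_v = cone a
    have hveq : Wce v = Wce ga := by
      rw [hga]
      ext x
      rw [hWv x]
      constructor
      · rintro (h | ⟨h, -⟩)
        · by_contra hxa
          have hxa' : A.r x a = true := by
            cases h' : A.r x a
            · exact absurd h' hxa
            · rfl
          rw [A.rtrans hxa' ham] at h
          exact absurd h (by simp)
        · exact h
      · intro h
        exact Or.inr ⟨h, hc⟩
    have hfeq : Wce (f v) = Wce (f ga) := hwd v ga hveq
    have hmb_in : mb ∈ Wce (f ga) := hfeq ▸ hc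
    have h1 : B.r mb ba = false := hba.2 mb hmb_in
    have hne : ba ≠ mb := by
      intro heq
      subst heq
      have hEB : Emin B (f ga) (f e) := Or.inr ⟨ba, hba, hmb⟩
      have hEA : Emin A ga e := (hred ga e).2 hEB
      rcases hEA with ⟨h3, -⟩ | ⟨m'', h3, h4⟩
      · rw [h3] at hga_min; exact hga_min.1
      · have e1 : m'' = a := min_unique A h3 hga_min
        have e2 : m'' = m := min_unique A h4 hm
        rw [e1] at e2
        rw [e2] at ham
        rw [A.irrefl m] at ham
        exact absurd ham (by simp)
    have h2 : B.r ba mb = true := by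
      cases h' : B.r ba mb
      · exact absurd (B.trichot h' h1) hne
      · rfl
    calc δ = A.rank a := hrank.symm
      _ ≤ B.rank ba := hrba
      _ < B.rank mb := rank_lt_rank B h2
  · -- W_v = cone m, so W_{f v} = W_{f gm} which contains mb: contradiction
    exfalso
    have hveq : Wce v = Wce gm := by
      rw [hgm]
      ext x
      rw [hWv x]
      constructor
      · rintro (h | ⟨-, h⟩)
        · exact h
        · exact absurd h hc
      · exact fun h => Or.inl h
    have hfeq : Wce (f v) = Wce (f gm) := hwd v gm hveq
    have hEB : Emin B (f gm) (f e) := (hred gm e).1 (Or.inr ⟨m, hgm_min, hm⟩)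
    rcases hEB with ⟨-, h2⟩ | ⟨mb', h1, h2⟩
    · rw [h2] at hmb; exact hmb.1
    · have : mb' = mb := min_unique B h2 hmb
      subst this
      rw [← hfeq] at h1
      exact hc h1.1
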